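/- Invariance to duplication: Let = E[(V̂ − c𝟙)(V̂ − c𝟙)ᵀ] ∈ ℝ^{k×k} be positive definite and let B ∈ ℝ^{(k+1)×(k+1)} be the analogous matrix for the vector (V̂₁,…,V̂ₖ, V̂ₖ₊₁) where V̂ₖ₊₁ = V̂ₖ almost surely. If α̂ minimizes αᵀ Â α subject to ∑ᵢ₌₁ᵏ αᵢ = 1, and β* minimizes βᵀ B β subject to ∑ᵢ₌₁^{k+1} βᵢ = 1, then ∑ᵢ₌₁^{k+1} β*ᵢ V̂ᵢ = ∑ᵢ₌₁ᵏ α̂ᵢ V̂ᵢ almost surely. -/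

import Mathlib

open MeasureTheory Matrix

/-- Collapse index: identity on indices `< k`, sends the last index to `k-1`. -/
def dupIdx {k : ℕ} (hk : 0 < k) (i : Fin (k + 1)) : Fin k :=
  if h : (i : ℕ) < k then ⟨i, h⟩ else ⟨k - 1, Nat.sub_lt hk one_pos⟩

lemma dupIdx_castSucc {k : ℕ} (hk : 0 < k) (a : Fin k) :
    dupIdx hk a.castSucc = a := by
  simp only [dupIdx, Fin.coe_castSucc, a.isLt, dif_pos]

lemma dupIdx_last {k : ℕ} (hk : 0 < k) :
    dupIdx hk (Fin.last k) = ⟨k - 1, Nat.sub_lt hk one_pos⟩ := by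
  simp [dupIdx]

/-- Collapse a weight vector on `Fin (k+1)` to one on `Fin k`. -/
noncomputable def collapse {k : ℕ} (γ : Fin (k + 1) → ℝ) (a : Fin k) : ℝ :=
  γ a.castSucc + if (a : ℕ) = k - 1 then γ (Fin.last k) else 0

lemma collapse_spec {k : ℕ} (hk : 0 < k) (γ : Fin (k + 1) → ℝ) (h : Fin k → ℝ) :
    ∑ i, γ i * h (dupIdx hk i) = ∑ a, collapse γ a * h a := by
  have key : ∀ a : Fin k, ((a : ℕ) = k - 1) ↔ a = (⟨k - 1, Nat.sub_lt hk one_pos⟩ : Fin k) := by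
    intro a; constructor
    · intro ha; exact Fin.ext ha
    · intro ha; rw [ha]
  rw [Fin.sum_univ_castSucc]
  simp only [dupIdx_castSucc, dupIdx_last, collapse, add_mul, Finset.sum_add_distrib]
  congr 1
  simp only [ite_mul, zero_mul]
  simp_rw [key]
  rw [Finset.sum_ite_eq' Finset.univ (⟨k - 1, Nat.sub_lt hk one_pos⟩ : Fin k)
    (fun a => γ (Fin.last k) * h a)]
  simp

theorem stmt_8 {Ω : Type*} [MeasurableSpace Ω] (μ : Measure Ω) [IsProbabilityMeasure μ]
    {k : ℕ} (hk : 0 < k) (Vh : Fin k → Ω → ℝ) (c : ℝ)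
    (W : Fin (k + 1) → Ω → ℝ)
    (hW : ∀ i : Fin k, W i.castSucc = Vh i)
    (hWlast : ∀ᵐ ω ∂μ, W (Fin.last k) ω = Vh ⟨k - 1, Nat.sub_lt hk one_pos⟩ ω)
    (hint : ∀ i j, Integrable (fun ω => (W i ω - c) * (W j ω - c)) μ)
    (A : Matrix (Fin k) (Fin k) ℝ)
    (hA : ∀ i j, A i j = ∫ ω, (Vh i ω - c) * (Vh j ω - c) ∂μ)
    (B : Matrix (Fin (k + 1)) (Fin (k + 1)) ℝ)
    (hB : ∀ i j, B i j = ∫ ω, (W i ω - c) * (W j ω - c) ∂μ)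
    (hApd : A.PosDef)
    (αh : Fin k → ℝ) (hαsum : ∑ i, αh i = 1)
    (hαmin : ∀ α : Fin k → ℝ, ∑ i, α i = 1 → αh ⬝ᵥ A *ᵥ αh ≤ α ⬝ᵥ A *ᵥ α)
    (β : Fin (k + 1) → ℝ) (hβsum : ∑ i, β i = 1)
    (hβmin : ∀ γ : Fin (k + 1) → ℝ, ∑ i, γ i = 1 → β ⬝ᵥ B *ᵥ β ≤ γ ⬝ᵥ B *ᵥ γ) :
    ∀ᵐ ω ∂μ, ∑ i, β i * W i ω = ∑ i, αh i * Vh i ω := by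
  set f := dupIdx hk with hf
  -- a.e. identification of W with Vh ∘ f
  have hWf : ∀ i, ∀ᵐ ω ∂μ, W i ω = Vh (f i) ω := by
    intro i
    by_cases h : (i : ℕ) < k
    · have : i = (⟨(i : ℕ), h⟩ : Fin k).castSucc := Fin.ext rfl
      rw [this, hW]
      have : f (⟨(i : ℕ), h⟩ : Fin k).castSucc = ⟨(i : ℕ), h⟩ := dupIdx_castSucc hk _
      rw [this]
      exact Filter.Eventually.of_forall fun _ => rfl
    · have hi : i = Fin.last k := by
        apply Fin.ext
        simpa using Nat.le_antisymm (Nat.lt_succ_iff.mp i.isLt) (Nat.le_of_not_lt h)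
      rw [hi, hf, dupIdx_last hk]
      exact hWlast
  -- B in terms of A
  have hBA : ∀ i j, B i j = A (f i) (f j) := by
    intro i j
    rw [hB, hA]
    apply integral_congr_ae
    filter_upwards [hWf i, hWf j] with ω h1 h2
    rw [h1, h2]
  -- symmetry of A
  have hAsymm : ∀ i j, A i j = A j i := by
    intro i j
    rw [hA, hA]
    congr 1; funext ω; ring
  -- sum preservation of collapse
  have hcsum : ∀ γ : Fin (k + 1) → ℝ, ∑ a, collapse γ a = ∑ i, γ i := by
    intro γ
    have := collapse_spec hk γ (fun _ => 1)
    simpa using this.symm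
  -- quadratic form identity
  have hquad : ∀ γ : Fin (k + 1) → ℝ, γ ⬝ᵥ B *ᵥ γ = collapse γ ⬝ᵥ A *ᵥ collapse γ := by
    intro γ
    have step1 : γ ⬝ᵥ B *ᵥ γ = ∑ i, γ i * (∑ j, γ j * A (f i) (f j)) := by
      simp only [dotProduct, mulVec, dotProduct, hBA]
      exact Finset.sum_congr rfl fun i _ => by
        congr 1
        exact Finset.sum_congr rfl fun j _ => mul_comm _ _
    have step2 : ∀ a, (∑ j, γ j * A a (f j)) = ∑ b, collapse γ b * A a b := fun a =>
      collapse_spec hk γ (A a)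
    rw [step1]
    simp_rw [step2]
    rw [collapse_spec hk γ (fun a => ∑ b, collapse γ b * A a b)]
    simp only [dotProduct, mulVec, dotProduct]
    exact Finset.sum_congr rfl fun a _ => by
      congr 1
      exact Finset.sum_congr rfl fun b _ => mul_comm _ _
  -- extension of a weight vector
  set E : (Fin k → ℝ) → (Fin (k + 1) → ℝ) :=
    fun α i => if h : (i : ℕ) < k then α ⟨i, h⟩ else 0 with hE
  have hEcastSucc : ∀ (α : Fin k → ℝ) (a : Fin k), E α a.castSucc = α a := by
    intro α a
    simp only [hE, Fin.coe_castSucc, a.isLt, dif_pos]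
  have hElast : ∀ α : Fin k → ℝ, E α (Fin.last k) = 0 := by
    intro α; simp [hE]
  have hEsum : ∀ α : Fin k → ℝ, ∑ i, E α i = ∑ a, α a := by
    intro α
    rw [Fin.sum_univ_castSucc, hElast]
    simp only [hEcastSucc, add_zero]
  have hcollE : ∀ α : Fin k → ℝ, collapse (E α) = α := by
    intro α
    funext a
    simp only [collapse, hEcastSucc, hElast, ite_self, add_zero]
  -- equality of minimum values
  have hβval : β ⬝ᵥ B *ᵥ β = αh ⬝ᵥ A *ᵥ αh := by
    apply le_antisymm
    · have h1 := hβmin (E αh) (by rw [hEsum]; exact hαsum)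
      rwa [hquad (E αh), hcollE] at h1
    · have h2 := hαmin (collapse β) (by rw [hcsum]; exact hβsum)
      rwa [← hquad β] at h2
  -- symmetry of the bilinear form
  have hsym : ∀ x y : Fin k → ℝ, x ⬝ᵥ A *ᵥ y = y ⬝ᵥ A *ᵥ x := by
    intro x y
    simp only [dotProduct, mulVec, dotProduct, Finset.mul_sum]
    rw [Finset.sum_comm]
    exact Finset.sum_congr rfl fun j _ => Finset.sum_congr rfl fun i _ => by
      rw [hAsymm i j]; ring
  -- uniqueness: collapse β = αh
  have hTβ : collapse β = αh := by
    by_contra hne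
    set x := collapse β with hx
    set y := αh with hy
    have hd : x - y ≠ 0 := sub_ne_zero.mpr hne
    have hpos : 0 < (x - y) ⬝ᵥ A *ᵥ (x - y) := by
      have := hApd.dotProduct_mulVec_pos hd
      simpa using this
    set m := αh ⬝ᵥ A *ᵥ αh with hm
    have hxm : x ⬝ᵥ A *ᵥ x = m := by
      rw [hx, ← hquad β, hβval]
    -- midpoint
    set z : Fin k → ℝ := fun a => (x a + y a) / 2 with hz
    have hzsum : ∑ a, z a = 1 := by
      have hxsum : ∑ a, x a = 1 := by rw [hx, hcsum]; exact hβsum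
      simp only [hz]
      rw [← Finset.sum_div, Finset.sum_add_distrib, hxsum, hαsum]
      norm_num
    have hzmin := hαmin z hzsum
    -- expand quadratic forms
    have hzq : z ⬝ᵥ A *ᵥ z =
        (x ⬝ᵥ A *ᵥ x + 2 * (x ⬝ᵥ A *ᵥ y) + y ⬝ᵥ A *ᵥ y) / 4 := by
      have hzeq : z = (1/2 : ℝ) • (x + y) := by
        funext a; simp [hz]; ring
      rw [hzeq, smul_dotProduct, mulVec_smul, dotProduct_smul, mulVec_add,
        dotProduct_add, add_dotProduct, add_dotProduct, hsym y x]
      simp only [smul_eq_mul]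
      ring
    have hdq : (x - y) ⬝ᵥ A *ᵥ (x - y) =
        x ⬝ᵥ A *ᵥ x - 2 * (x ⬝ᵥ A *ᵥ y) + y ⬝ᵥ A *ᵥ y := by
      rw [sub_eq_add_neg, mulVec_add, dotProduct_add, add_dotProduct, add_dotProduct,
        mulVec_neg, dotProduct_neg, neg_dotProduct, neg_dotProduct, dotProduct_neg,
        hsym y x]
      ring
    have hym : y ⬝ᵥ A *ᵥ y = m := by rw [hy, hm]
    nlinarith [hzmin, hzq, hdq, hpos, hxm, hym]
  -- conclude a.e.
  have hall : ∀ᵐ ω ∂μ, ∀ i, W i ω = Vh (f i) ω := ae_all_iff.mpr hWf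
  filter_upwards [hall] with ω hω
  calc ∑ i, β i * W i ω = ∑ i, β i * Vh (f i) ω := by
        exact Finset.sum_congr rfl fun i _ => by rw [hω i]
    _ = ∑ a, collapse β a * Vh a ω := collapse_spec hk β (fun a => Vh a ω)
    _ = ∑ a, αh a * Vh a ω := by rw [hTβ]
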